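/- arXiv:1906.11046 — 2 statements merged into one kernel-verified Lean document; each statement's English description precedes it below -/
import Mathlib

section
/- Let N ≥ 1 be an integer, τ > 0, κ > 0, T = N·τ, and X a real number. Suppose a sequence x_0, x_1, …, x_N of reals satisfies x_0 = X, x_N = 0, and the recurrence x_{k−1} − 2·x_k + x_{k+1} = 2·(cosh(κτ) − 1)·x_k for all 1 ≤ k ≤ N−1. Then x_k = X·sinh(κ·(T − kτ))/sinh(κ·T) for every 0 ≤ k ≤ N. -/
open Real

/-- The boundary-value problem `x_0 = X`, `x_N = 0` for the difference equation
`x_{k−1} − 2x_k + x_{k+1} = 2(cosh(κτ) − 1)·x_k` (the discrete Almgren–Chriss stationarity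
condition) has the sinh trajectory `x_k = X·sinh(κ(T − kτ))/sinh(κT)` as its unique solution. -/
theorem recurrence_bvp_unique_solution (N : ℕ) (hN : 1 ≤ N) (τ κ T X : ℝ)
    (hτ : 0 < τ) (hκ : 0 < κ) (hT : T = N * τ)
    (x : ℕ → ℝ) (hx0 : x 0 = X) (hxN : x N = 0)
    (hrec : ∀ k : ℕ, 1 ≤ k → k ≤ N - 1 →
      x (k - 1) - 2 * x k + x (k + 1) = 2 * (cosh (κ * τ) - 1) * x k) :
    ∀ k ≤ N, x k = X * sinh (κ * (T - (k : ℝ) * τ)) / sinh (κ * T) := by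
  set θ := κ * τ with hθdef
  have hθ : 0 < θ := mul_pos hκ hτ
  have hsθ : 0 < Real.sinh θ := Real.sinh_pos_iff.2 hθ
  have key : ∀ k, k ≤ N →
      x k * Real.sinh θ = -X * Real.sinh ((k : ℝ) * θ - θ) + x 1 * Real.sinh ((k : ℝ) * θ) := by
    intro k
    induction k using Nat.strong_induction_on with
    | _ k ih =>
      match k with
      | 0 =>
        intro _
        simp [hx0, Real.sinh_neg]
      | 1 =>
        intro _
        simp
      | (m + 2) =>
        intro hk
        have h1 := ih m (by omega) (by omega)
        have h2 := ih (m + 1) (by omega) (by omega)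
        have hr := hrec (m + 1) (by omega) (by omega)
        simp only [Nat.add_sub_cancel] at hr
        have hx2 : x (m + 2) = 2 * Real.cosh θ * x (m + 1) - x m := by linarith
        rw [hx2]
        push_cast at h1 h2 ⊢
        have e1 : ((m : ℝ) + 2) * θ - θ = ((m : ℝ) * θ + θ) := by ring
        have e2 : ((m : ℝ) + 2) * θ = ((m : ℝ) * θ + θ) + θ := by ring
        have e3 : ((m : ℝ) + 1) * θ - θ = (m : ℝ) * θ := by ring
        have e4 : ((m : ℝ) + 1) * θ = (m : ℝ) * θ + θ := by ring
        rw [e1, e2] 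
        rw [e3, e4] at h2
        rw [Real.sinh_add ((m:ℝ)*θ + θ) θ, Real.sinh_add, Real.cosh_add, Real.sinh_sub] at *
        linear_combination (2*Real.cosh θ) * h2 - h1 + x 1 * Real.sinh ((m:ℝ)*θ) * (Real.cosh_sq_sub_sinh_sq θ)
  -- boundary condition at N
  have hNθ : Real.sinh ((N : ℝ) * θ) > 0 := by
    apply Real.sinh_pos_iff.2
    have : (1:ℝ) ≤ (N:ℝ) := by exact_mod_cast hN
    nlinarith
  have hbnd := key N le_rfl
  rw [hxN] at hbnd
  -- x 1 * sinh(Nθ) = X * sinh(Nθ - θ)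
  have hx1 : x 1 * Real.sinh ((N : ℝ) * θ) = X * Real.sinh ((N : ℝ) * θ - θ) := by linarith
  intro k hk
  have hkey := key k hk
  have hident : Real.sinh ((N:ℝ)*θ - θ) * Real.sinh ((k:ℝ)*θ)
      - Real.sinh ((k:ℝ)*θ - θ) * Real.sinh ((N:ℝ)*θ)
      = Real.sinh θ * Real.sinh ((N:ℝ)*θ - (k:ℝ)*θ) := by
    rw [Real.sinh_sub, Real.sinh_sub, Real.sinh_sub]
    ring
  have harg : κ * (T - (k:ℝ) * τ) = (N:ℝ)*θ - (k:ℝ)*θ := by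
    rw [hT]; ring
  have harg2 : κ * T = (N:ℝ)*θ := by rw [hT]; ring
  rw [harg, harg2]
  have : x k * Real.sinh θ * Real.sinh ((N:ℝ)*θ)
      = X * Real.sinh θ * Real.sinh ((N:ℝ)*θ - (k:ℝ)*θ) := by
    calc x k * Real.sinh θ * Real.sinh ((N:ℝ)*θ)
        = (-X * Real.sinh ((k : ℝ) * θ - θ) + x 1 * Real.sinh ((k : ℝ) * θ)) * Real.sinh ((N:ℝ)*θ) := by rw [hkey]
      _ = -X * Real.sinh ((k : ℝ) * θ - θ) * Real.sinh ((N:ℝ)*θ)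
            + (x 1 * Real.sinh ((N:ℝ)*θ)) * Real.sinh ((k : ℝ) * θ) := by ring
      _ = -X * Real.sinh ((k : ℝ) * θ - θ) * Real.sinh ((N:ℝ)*θ)
            + (X * Real.sinh ((N : ℝ) * θ - θ)) * Real.sinh ((k : ℝ) * θ) := by rw [hx1]
      _ = X * (Real.sinh ((N:ℝ)*θ - θ) * Real.sinh ((k:ℝ)*θ)
            - Real.sinh ((k:ℝ)*θ - θ) * Real.sinh ((N:ℝ)*θ)) := by ring
      _ = X * (Real.sinh θ * Real.sinh ((N:ℝ)*θ - (k:ℝ)*θ)) := by rw [hident]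
      _ = X * Real.sinh θ * Real.sinh ((N:ℝ)*θ - (k:ℝ)*θ) := by ring
  field_simp
  rw [show θ * ((N:ℝ) - (k:ℝ)) = (N:ℝ)*θ - (k:ℝ)*θ by ring]
  nlinarith [this, hsθ, hNθ]
end

section
/- Fix T > 0 and t with 0 < t < T. The function κ ↦ sinh(κ·(T − t))/sinh(κ·T) is strictly decreasing on (0, ∞). -/
open Real

lemma hasDerivAt_g (w : ℝ) (hw : 0 < w) :
    HasDerivAt (fun w : ℝ => w * cosh w / sinh w)
      (((1 * cosh w + w * sinh w) * sinh w - w * cosh w * cosh w) / sinh w ^ 2) w := by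
  have hs : sinh w ≠ 0 := ne_of_gt (Real.sinh_pos_iff.mpr hw)
  exact ((hasDerivAt_id w).mul (Real.hasDerivAt_cosh w)).div (Real.hasDerivAt_sinh w) hs

lemma g_strictMono : StrictMonoOn (fun w : ℝ => w * cosh w / sinh w) (Set.Ioi 0) := by
  apply strictMonoOn_of_deriv_pos (convex_Ioi 0)
  · apply ContinuousOn.div (by fun_prop) (by fun_prop)
    intro w hw
    exact ne_of_gt (Real.sinh_pos_iff.mpr hw)
  · intro w hw
    rw [interior_Ioi] at hw
    rw [(hasDerivAt_g w hw).deriv]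
    have hs : 0 < sinh w := Real.sinh_pos_iff.mpr hw
    have hw' : w < sinh w := Real.self_lt_sinh_iff.mpr hw
    have hc : 1 ≤ cosh w := Real.one_le_cosh w
    have hid : cosh w ^ 2 - sinh w ^ 2 = 1 := Real.cosh_sq_sub_sinh_sq w
    apply div_pos _ (by positivity)
    nlinarith [mul_pos hs (mul_pos hs hs)]

lemma key_ineq {u v : ℝ} (hu : 0 < u) (huv : u < v) :
    u * cosh u * sinh v < v * cosh v * sinh u := by
  have hv : 0 < v := hu.trans huv
  have hsu : 0 < sinh u := Real.sinh_pos_iff.mpr hu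
  have hsv : 0 < sinh v := Real.sinh_pos_iff.mpr hv
  have := g_strictMono (Set.mem_Ioi.mpr hu) (Set.mem_Ioi.mpr hv) huv
  simp only at this
  rw [div_lt_div_iff₀ hsu hsv] at this
  linarith

/-- For fixed `0 < t < T`, the normalized optimal remaining inventory
`κ ↦ sinh(κ(T−t))/sinh(κT)` is strictly decreasing in the urgency parameter `κ` on `(0, ∞)`. -/
theorem strictAntiOn_sinh_ratio (T t : ℝ) (hT : 0 < T) (ht : 0 < t) (htT : t < T) :
    StrictAntiOn (fun κ : ℝ => sinh (κ * (T - t)) / sinh (κ * T)) (Set.Ioi 0) := by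
  have hA : 0 < T - t := by linarith
  apply strictAntiOn_of_deriv_neg (convex_Ioi 0)
  · apply ContinuousOn.div (by fun_prop) (by fun_prop)
    intro κ hκ
    exact ne_of_gt (Real.sinh_pos_iff.mpr (mul_pos hκ hT))
  · intro κ hκ
    rw [interior_Ioi] at hκ
    have hκT : 0 < sinh (κ * T) := Real.sinh_pos_iff.mpr (mul_pos hκ hT)
    have h1 : HasDerivAt (fun κ : ℝ => sinh (κ * (T - t))) (cosh (κ * (T - t)) * (1 * (T - t))) κ :=
      by have := (Real.hasDerivAt_sinh (κ * (T - t))).comp κ ((hasDerivAt_id κ).mul_const (T - t)); exact this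
    have h2 : HasDerivAt (fun κ : ℝ => sinh (κ * T)) (cosh (κ * T) * (1 * T)) κ :=
      by have := (Real.hasDerivAt_sinh (κ * T)).comp κ ((hasDerivAt_id κ).mul_const T); exact this
    have hκ' : (0:ℝ) < κ := hκ
    rw [show deriv (fun κ : ℝ => sinh (κ * (T - t)) / sinh (κ * T)) κ = _ from (h1.div h2 (ne_of_gt hκT)).deriv]
    apply div_neg_of_neg_of_pos _ (by positivity)
    have hk := key_ineq (mul_pos hκ' hA) (by nlinarith : κ * (T - t) < κ * T)
    nlinarith
end
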